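/- Let θ be inner on 𝔻 and λ_n → ζ ∈ 𝕋. If the system of reproducing kernels {k_{λ_n}} of K_θ is overcomplete (every subsequence is complete in K_θ), then sup_n ‖k_{λ_n}‖ < ∞, and consequently ζ is an Ahern–Clark point of θ (θ has an angular derivative in the sense of Carathéodory at ζ). -/

import Mathlib

open Filter Topology MeasureTheory

noncomputable section

/-- A sequence `v` in a complex Hilbert space is a *Riesz sequence* if there are constants
`0 < c ≤ C` with `c·Σ|aₙ|² ≤ ‖Σ aₙ vₙ‖² ≤ C·Σ|aₙ|²` for all finitely supported scalars. -/
def RieszSeq {H : Type*} [NormedAddCommGroup H] [InnerProductSpace ℂ H] (v : ℕ → H) : Prop :=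
  ∃ c C : ℝ, 0 < c ∧ c ≤ C ∧ ∀ (a : ℕ → ℂ) (s : Finset ℕ),
    c * ∑ n ∈ s, ‖a n‖ ^ 2 ≤ ‖∑ n ∈ s, a n • v n‖ ^ 2 ∧
      ‖∑ n ∈ s, a n • v n‖ ^ 2 ≤ C * ∑ n ∈ s, ‖a n‖ ^ 2

/-- A sequence is *uniformly minimal* if it admits a biorthogonal system of uniformly
bounded norms. -/
def UniformlyMinimal {H : Type*} [NormedAddCommGroup H] [InnerProductSpace ℂ H]
    (v : ℕ → H) : Prop :=
  ∃ (y : ℕ → H) (M : ℝ), (∀ n m, (inner ℂ (v n) (y m) : ℂ) = if n = m then 1 else 0) ∧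
    ∀ m, ‖y m‖ ≤ M

/-- A sequence is *minimal* if no element lies in the closed linear span of the others. -/
def MinimalSeq {H : Type*} [NormedAddCommGroup H] [InnerProductSpace ℂ H] (v : ℕ → H) : Prop :=
  ∀ m, v m ∉ closure ((Submodule.span ℂ (v '' {n | n ≠ m}) : Submodule ℂ H) : Set H)

/-- A sequence of vectors is *overcomplete* if every subsequence has dense linear span. -/
def Overcomplete {H : Type*} [NormedAddCommGroup H] [InnerProductSpace ℂ H] (v : ℕ → H) : Prop :=
  ∀ φ : ℕ → ℕ, StrictMono φ → Dense ((Submodule.span ℂ (Set.range (v ∘ φ)) : Submodule ℂ H) : Set H)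

/-- The Stolz angle `Γ_γ(ζ) = {z ∈ 𝔻 : |z - ζ| ≤ γ(1 - |z|)}` at a boundary point `ζ`. -/
def Stolz (γ : ℝ) (ζ : ℂ) : Set ℂ :=
  {z | z ∈ Metric.ball (0 : ℂ) 1 ∧ ‖z - ζ‖ ≤ γ * (1 - ‖z‖)}

/-- `ζ ∈ 𝕋` is an *Ahern–Clark (Julia–Carathéodory) point* of the inner function `θ`:
the Julia quotient `(1-|θ(z)|)/(1-|z|)` has finite liminf as `z → ζ` in `𝔻`; by the
Julia–Carathéodory theorem this is equivalent to `θ` having a unimodular nontangential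
boundary value and a finite angular derivative at `ζ`. -/
def AhernClarkPoint (θ : ℂ → ℂ) (ζ : ℂ) : Prop :=
  ∃ M : ℝ, ∃ᶠ z in nhdsWithin ζ (Metric.ball (0 : ℂ) 1),
    (1 - ‖θ z‖) / (1 - ‖z‖) ≤ M

/-- `K` (together with the injection `J` into functions on `ℂ` and the kernel map `k`) is the
model space `K_θ = H² ⊖ θH²` of the inner function `θ` on the unit disc: `θ` is inner
(bounded analytic with unimodular radial limits a.e.), elements of `K` are analytic on `𝔻`,
`k λ` is the reproducing kernel at `λ` given by the explicit formula
`k_λ(z) = (1 - conj(θ(λ))θ(z))/(1 - conj(λ)z)`, and (Aleksandrov) the functions extending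
continuously to the closed disc are dense in `K`. -/
structure IsModelSpace {K : Type*} [NormedAddCommGroup K] [InnerProductSpace ℂ K]
    [CompleteSpace K] (θ : ℂ → ℂ) (J : K →ₗ[ℂ] (ℂ → ℂ)) (k : ℂ → K) : Prop where
  theta_diff : DifferentiableOn ℂ θ (Metric.ball 0 1)
  theta_bdd : ∀ z ∈ Metric.ball (0 : ℂ) 1, ‖θ z‖ ≤ 1
  theta_unimod : ∀ᵐ (t : ℝ) ∂(volume : Measure ℝ),
    Tendsto (fun r : ℝ => ‖θ ((r : ℂ) * Complex.exp ((t : ℂ) * Complex.I))‖)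
      (nhdsWithin 1 (Set.Iio 1)) (nhds 1)
  J_inj : Function.Injective J
  anal : ∀ f : K, DifferentiableOn ℂ (J f) (Metric.ball 0 1)
  repro : ∀ (f : K) (l : ℂ), l ∈ Metric.ball (0 : ℂ) 1 → J f l = (inner ℂ (k l) f : ℂ)
  kernel_eq : ∀ l ∈ Metric.ball (0 : ℂ) 1, ∀ z ∈ Metric.ball (0 : ℂ) 1,
    J (k l) z = (1 - (starRingEnd ℂ) (θ l) * θ z) / (1 - (starRingEnd ℂ) l * z)
  dense_cont : Dense {f : K | ∃ g : ℂ → ℂ, ContinuousOn g (Metric.closedBall 0 1) ∧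
    Set.EqOn g (J f) (Metric.ball 0 1)}

section AuxSTMT7
set_option maxHeartbeats 1000000


lemma geom_aux (s : Finset ℕ) : ∑ n ∈ s, ((1:ℝ)/2)^(n+1) ≤ 1 := by
  obtain ⟨N, hN⟩ := s.exists_nat_subset_range
  calc ∑ n ∈ s, ((1:ℝ)/2)^(n+1) ≤ ∑ n ∈ Finset.range N, ((1:ℝ)/2)^(n+1) :=
        Finset.sum_le_sum_of_subset_of_nonneg hN (fun i _ _ => by positivity)
    _ = (1/2) * ∑ n ∈ Finset.range N, ((1:ℝ)/2)^n := by
        rw [Finset.mul_sum]; exact Finset.sum_congr rfl (fun n _ => by ring)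
    _ ≤ (1/2) * 2 := by nlinarith [sum_geometric_two_le N]
    _ = 1 := by norm_num

lemma core_est {K : Type*} [NormedAddCommGroup K] [InnerProductSpace ℂ K]
    (u : ℕ → K) (hn : ∀ n, ‖u n‖ = 1)
    (hG : ∀ i m, i ≠ m → ‖(inner ℂ (u i) (u m) : ℂ)‖ ≤ (1/2)^i * (1/2)^m / 64)
    (a : ℕ → ℂ) (s : Finset ℕ) :
    (1/2 : ℝ) ≤ ‖u 0 - ∑ n ∈ s, a n • u (n+1)‖ := by
  classical
  obtain ⟨T, hTdef⟩ : ∃ x : ℝ, x = ∑ n ∈ s, ‖a n‖^2 := ⟨_, rfl⟩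
  have hT0 : 0 ≤ T := hTdef ▸ Finset.sum_nonneg (fun n _ => by positivity)
  obtain ⟨t, htdef⟩ : ∃ x : ℝ, x = Real.sqrt T := ⟨_, rfl⟩
  have ht0 : 0 ≤ t := htdef ▸ Real.sqrt_nonneg _
  have ht2 : t^2 = T := htdef ▸ Real.sq_sqrt hT0
  have ha : ∀ n ∈ s, ‖a n‖ ≤ t := by
    intro n hns
    have h1 : ‖a n‖^2 ≤ T := hTdef ▸ Finset.single_le_sum (f := fun n => ‖a n‖^2)
      (fun i _ => by positivity) hns
    have := htdef ▸ Real.sqrt_le_sqrt h1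
    rwa [Real.sqrt_sq (norm_nonneg _)] at this
  obtain ⟨y, hydef⟩ : ∃ x : K, x = ∑ n ∈ s, a n • u (n+1) := ⟨_, rfl⟩
  -- cross term
  have hcross : ‖(inner ℂ (u 0) y : ℂ)‖ ≤ t / 64 := by
    have h1 : (inner ℂ (u 0) y : ℂ) = ∑ n ∈ s, a n * (inner ℂ (u 0) (u (n+1)) : ℂ) := by
      rw [hydef, inner_sum]
      exact Finset.sum_congr rfl (fun n _ => inner_smul_right _ _ _)
    rw [h1]
    calc ‖∑ n ∈ s, a n * (inner ℂ (u 0) (u (n+1)) : ℂ)‖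
        ≤ ∑ n ∈ s, ‖a n * (inner ℂ (u 0) (u (n+1)) : ℂ)‖ := norm_sum_le _ _
      _ ≤ ∑ n ∈ s, t * ((1/2)^(n+1) / 64) := by
          apply Finset.sum_le_sum
          intro n hns
          rw [norm_mul]
          have h2 := hG 0 (n+1) (by omega)
          simp only [pow_zero, one_mul] at h2
          exact mul_le_mul (ha n hns) h2 (norm_nonneg _) ht0
      _ = t / 64 * ∑ n ∈ s, ((1:ℝ)/2)^(n+1) := by
          rw [Finset.mul_sum]; exact Finset.sum_congr rfl (fun n _ => by ring)
      _ ≤ t / 64 * 1 := by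
          apply mul_le_mul_of_nonneg_left (geom_aux s) (by positivity)
      _ = t / 64 := by ring
  -- norm of y below
  have hyy : (inner ℂ y y : ℂ) =
      ∑ i ∈ s, ∑ m ∈ s, (starRingEnd ℂ) (a i) * a m * (inner ℂ (u (i+1)) (u (m+1)) : ℂ) := by
    rw [hydef, sum_inner]
    refine Finset.sum_congr rfl (fun i _ => ?_)
    rw [inner_smul_left, inner_sum, Finset.mul_sum]
    exact Finset.sum_congr rfl (fun m _ => by rw [inner_smul_right]; ring)
  have hdiag : ∀ i : ℕ, (inner ℂ (u (i+1)) (u (i+1)) : ℂ) = 1 := by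
    intro i
    rw [inner_self_eq_norm_sq_to_K, hn]
    norm_num
  have hsplit : (inner ℂ y y : ℂ) - (T : ℂ) =
      ∑ i ∈ s, ∑ m ∈ s.erase i, (starRingEnd ℂ) (a i) * a m * (inner ℂ (u (i+1)) (u (m+1)) : ℂ) := by
    rw [hyy]
    have : ∀ i ∈ s, ∑ m ∈ s, (starRingEnd ℂ) (a i) * a m * (inner ℂ (u (i+1)) (u (m+1)) : ℂ)
        = ((‖a i‖^2 : ℝ) : ℂ) + ∑ m ∈ s.erase i, (starRingEnd ℂ) (a i) * a m * (inner ℂ (u (i+1)) (u (m+1)) : ℂ) := by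
      intro i hi
      rw [← Finset.add_sum_erase s _ hi, hdiag]
      congr 1
      rw [mul_one, mul_comm, Complex.mul_conj, Complex.normSq_eq_norm_sq]
    rw [Finset.sum_congr rfl this, Finset.sum_add_distrib]
    push_cast [hTdef]
    ring
  have hE : ‖(inner ℂ y y : ℂ) - (T : ℂ)‖ ≤ t^2 / 64 := by
    rw [hsplit]
    calc ‖∑ i ∈ s, ∑ m ∈ s.erase i, (starRingEnd ℂ) (a i) * a m * (inner ℂ (u (i+1)) (u (m+1)) : ℂ)‖
        ≤ ∑ i ∈ s, ‖∑ m ∈ s.erase i, (starRingEnd ℂ) (a i) * a m * (inner ℂ (u (i+1)) (u (m+1)) : ℂ)‖ := norm_sum_le _ _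
      _ ≤ ∑ i ∈ s, ∑ m ∈ s.erase i, ‖(starRingEnd ℂ) (a i) * a m * (inner ℂ (u (i+1)) (u (m+1)) : ℂ)‖ :=
          Finset.sum_le_sum (fun i _ => norm_sum_le _ _)
      _ ≤ ∑ i ∈ s, ∑ m ∈ s.erase i, t * t * ((1/2)^(i+1) * (1/2)^(m+1) / 64) := by
          apply Finset.sum_le_sum; intro i hi
          apply Finset.sum_le_sum; intro m hm
          rw [norm_mul, norm_mul, RCLike.norm_conj]
          have hmi : m ∈ s := Finset.mem_of_mem_erase hm
          have hne : i + 1 ≠ m + 1 := by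
            have := Finset.ne_of_mem_erase hm; omega
          exact mul_le_mul (mul_le_mul (ha i hi) (ha m hmi) (norm_nonneg _) ht0)
            (hG (i+1) (m+1) hne) (norm_nonneg _) (by positivity)
      _ ≤ ∑ i ∈ s, ∑ m ∈ s, t * t * ((1/2)^(i+1) * (1/2)^(m+1) / 64) := by
          apply Finset.sum_le_sum; intro i _
          exact Finset.sum_le_sum_of_subset_of_nonneg (Finset.erase_subset _ _)
            (fun _ _ _ => by positivity)
      _ = (t * t / 64) * ((∑ i ∈ s, ((1:ℝ)/2)^(i+1)) * (∑ m ∈ s, ((1:ℝ)/2)^(m+1))) := by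
          rw [Finset.sum_mul_sum]
          rw [Finset.mul_sum]
          refine Finset.sum_congr rfl (fun i _ => ?_)
          rw [Finset.mul_sum]
          exact Finset.sum_congr rfl (fun m _ => by ring)
      _ ≤ (t * t / 64) * (1 * 1) := by
          apply mul_le_mul_of_nonneg_left _ (by positivity)
          exact mul_le_mul (geom_aux s) (geom_aux s)
            (Finset.sum_nonneg (fun n _ => by positivity)) (by linarith [geom_aux s])
      _ = t^2 / 64 := by ring
  have hy2 : T - t^2/64 ≤ ‖y‖^2 := by
    have h2 : |Complex.re ((inner ℂ y y : ℂ) - (T : ℂ))| ≤ t^2/64 :=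
      le_trans (Complex.abs_re_le_norm _) hE
    have h4 : Complex.re (inner ℂ y y : ℂ) = ‖y‖^2 := by
      have := inner_self_eq_norm_sq (𝕜 := ℂ) (x := y)
      simpa using this
    rw [Complex.sub_re, Complex.ofReal_re, h4] at h2
    have := abs_le.mp h2
    linarith [this.1]
  have hre : Complex.re (inner ℂ (u 0) y : ℂ) ≤ t/64 :=
    le_trans (Complex.re_le_norm _) hcross
  have hfin : (1/4 : ℝ) ≤ ‖u 0 - y‖^2 := by
    rw [norm_sub_sq (𝕜 := ℂ), hn 0]
    have : RCLike.re (inner ℂ (u 0) y : ℂ) = Complex.re (inner ℂ (u 0) y : ℂ) := rfl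
    rw [this]
    nlinarith [hy2, hre, ht2, ht0]
  rw [← hydef]
  nlinarith [norm_nonneg (u 0 - y), hfin]


lemma rec_extract (P : ℕ → ℕ → ℕ → Prop)
    (hP : ∀ m p, ∃ n, p < n ∧ P m p n) :
    ∃ j : ℕ → ℕ, j 0 = 0 ∧ StrictMono j ∧ ∀ m, P m (j m) (j (m+1)) := by
  classical
  let j : ℕ → ℕ := fun n => Nat.rec 0 (fun m ih => Classical.choose (hP m ih)) n
  have hstep : ∀ m, j m < j (m+1) ∧ P m (j m) (j (m+1)) :=
    fun m => Classical.choose_spec (hP m (j m))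
  exact ⟨j, rfl, strictMono_nat_of_lt_succ (fun m => (hstep m).1), fun m => (hstep m).2⟩


lemma weaknull {K : Type*} [NormedAddCommGroup K] [InnerProductSpace ℂ K] [CompleteSpace K]
    (θ : ℂ → ℂ) (J : K →ₗ[ℂ] (ℂ → ℂ)) (k : ℂ → K)
    (hrepro : ∀ (f : K) (l : ℂ), l ∈ Metric.ball (0 : ℂ) 1 → J f l = (inner ℂ (k l) f : ℂ))
    (hdense : Dense {f : K | ∃ g : ℂ → ℂ, ContinuousOn g (Metric.closedBall 0 1) ∧
      Set.EqOn g (J f) (Metric.ball 0 1)})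
    (ζ : ℂ) (hζ : ‖ζ‖ = 1) (L : ℕ → ℂ) (hL : ∀ n, L n ∈ Metric.ball (0 : ℂ) 1)
    (hlim : Tendsto L atTop (nhds ζ))
    (φ : ℕ → ℕ) (hφ : StrictMono φ) (hnorm : ∀ n : ℕ, (n : ℝ) + 1 ≤ ‖k (L (φ n))‖)
    (f : K) :
    Tendsto (fun n => ‖(inner ℂ ((↑‖k (L (φ n))‖ : ℂ)⁻¹ • k (L (φ n))) f : ℂ)‖)
      atTop (nhds 0) := by
  have hpos : ∀ n : ℕ, (0:ℝ) < ‖k (L (φ n))‖ := fun n => lt_of_lt_of_le (by positivity) (hnorm n)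
  have hxnorm : ∀ n : ℕ, ‖(↑‖k (L (φ n))‖ : ℂ)⁻¹ • k (L (φ n))‖ = 1 := by
    intro n
    rw [norm_smul, norm_inv, Complex.norm_real, Real.norm_of_nonneg (norm_nonneg _)]
    exact inv_mul_cancel₀ (ne_of_gt (hpos n))
  rw [Metric.tendsto_atTop]
  intro ε hε
  obtain ⟨f', hf'ball, g, hgc, hgeq⟩ :
      ∃ f', f' ∈ Metric.ball f (ε/4) ∧ ∃ g : ℂ → ℂ,
        ContinuousOn g (Metric.closedBall 0 1) ∧ Set.EqOn g (J f') (Metric.ball 0 1) := by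
    obtain ⟨f', hf1, hf2⟩ := (Metric.dense_iff.mp hdense f (ε/4) (by positivity))
    obtain ⟨g, hg1, hg2⟩ := hf2
    exact ⟨f', hf1, g, hg1, hg2⟩
  -- convergence of g along the sequence
  have hζcb : ζ ∈ Metric.closedBall (0:ℂ) 1 := by
    simp [Metric.mem_closedBall, Complex.dist_eq, hζ]
  have hLφ : Tendsto (fun n => L (φ n)) atTop (nhdsWithin ζ (Metric.closedBall 0 1)) :=
    tendsto_nhdsWithin_of_tendsto_nhds_of_eventually_within _
      (hlim.comp hφ.tendsto_atTop)
      (Filter.Eventually.of_forall (fun n => Metric.ball_subset_closedBall (hL (φ n))))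
  have hgconv : Tendsto (fun n => g (L (φ n))) atTop (nhds (g ζ)) :=
    ((hgc ζ hζcb).tendsto).comp hLφ
  have hbdd : ∀ᶠ n in atTop, ‖g (L (φ n))‖ ≤ ‖g ζ‖ + 1 :=
    hgconv.norm.eventually_le_const (show ‖g ζ‖ < ‖g ζ‖ + 1 by linarith)
  set C := ‖g ζ‖ + 1 with hC
  have hC0 : 0 < C := by positivity
  obtain ⟨N2, hN2⟩ : ∃ N : ℕ, C / ((N:ℝ) + 1) < ε/2 := by
    obtain ⟨N, hN⟩ := exists_nat_gt (C / (ε/2))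
    refine ⟨N, ?_⟩
    rw [div_lt_iff₀ (by positivity)]
    rw [div_lt_iff₀ (by positivity)] at hN
    nlinarith
  obtain ⟨N1, hN1⟩ := hbdd.exists_forall_of_atTop
  refine ⟨max N1 N2, fun n hn => ?_⟩
  have hn1 : N1 ≤ n := le_trans (le_max_left _ _) hn
  have hn2 : N2 ≤ n := le_trans (le_max_right _ _) hn
  have hmemn := hL (φ n)
  -- main estimate
  have hsplit : (inner ℂ ((↑‖k (L (φ n))‖ : ℂ)⁻¹ • k (L (φ n))) f : ℂ)
      = (inner ℂ ((↑‖k (L (φ n))‖ : ℂ)⁻¹ • k (L (φ n))) f' : ℂ)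
        + (inner ℂ ((↑‖k (L (φ n))‖ : ℂ)⁻¹ • k (L (φ n))) (f - f') : ℂ) := by
    rw [inner_sub_right]; ring
  have hterm1 : ‖(inner ℂ ((↑‖k (L (φ n))‖ : ℂ)⁻¹ • k (L (φ n))) f' : ℂ)‖ < ε/2 := by
    have h1 : (inner ℂ (k (L (φ n))) f' : ℂ) = g (L (φ n)) := by
      rw [← hrepro f' _ hmemn]
      exact (hgeq hmemn).symm
    rw [inner_smul_left, norm_mul, h1]
    have h2 : ‖(starRingEnd ℂ) ((↑‖k (L (φ n))‖ : ℂ)⁻¹)‖ = ‖k (L (φ n))‖⁻¹ := by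
      rw [RCLike.norm_conj, norm_inv, Complex.norm_real, Real.norm_of_nonneg (norm_nonneg _)]
    rw [h2]
    have h3 : ‖k (L (φ n))‖⁻¹ ≤ 1 / ((n:ℝ) + 1) := by
      rw [inv_le_comm₀ (hpos n) (by positivity), one_div, inv_inv]
      exact le_trans (by push_cast; norm_num) (hnorm n)
    calc ‖k (L (φ n))‖⁻¹ * ‖g (L (φ n))‖ ≤ (1 / ((n:ℝ)+1)) * C :=
          mul_le_mul h3 (hN1 n hn1) (norm_nonneg _) (by positivity)
      _ = C / ((n:ℝ)+1) := by ring
      _ ≤ C / ((N2:ℝ)+1) := by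
          apply div_le_div_of_nonneg_left (le_of_lt hC0) (by positivity)
          have : (N2:ℝ) ≤ (n:ℝ) := Nat.cast_le.mpr hn2
          linarith
      _ < ε/2 := hN2
  have hterm2 : ‖(inner ℂ ((↑‖k (L (φ n))‖ : ℂ)⁻¹ • k (L (φ n))) (f - f') : ℂ)‖ ≤ ε/4 := by
    calc ‖(inner ℂ ((↑‖k (L (φ n))‖ : ℂ)⁻¹ • k (L (φ n))) (f - f') : ℂ)‖
        ≤ ‖(↑‖k (L (φ n))‖ : ℂ)⁻¹ • k (L (φ n))‖ * ‖f - f'‖ := norm_inner_le_norm _ _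
      _ = ‖f - f'‖ := by rw [hxnorm n, one_mul]
      _ ≤ ε/4 := by
          have := Metric.mem_ball.mp hf'ball
          rw [dist_comm] at this
          rw [← dist_eq_norm]
          exact le_of_lt this
  rw [Real.dist_eq, sub_zero, abs_of_nonneg (norm_nonneg _), hsplit]
  calc ‖_ + _‖ ≤ _ + _ := norm_add_le _ _
    _ < ε/2 + ε/4 := by exact add_lt_add_of_lt_of_le hterm1 hterm2
    _ < ε := by linarith

lemma ac_aux {K : Type*} [NormedAddCommGroup K] [InnerProductSpace ℂ K] [CompleteSpace K]
    (θ : ℂ → ℂ) (J : K →ₗ[ℂ] (ℂ → ℂ)) (k : ℂ → K)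
    (hrepro : ∀ (f : K) (l : ℂ), l ∈ Metric.ball (0 : ℂ) 1 → J f l = (inner ℂ (k l) f : ℂ))
    (hker : ∀ l ∈ Metric.ball (0 : ℂ) 1, ∀ z ∈ Metric.ball (0 : ℂ) 1,
      J (k l) z = (1 - (starRingEnd ℂ) (θ l) * θ z) / (1 - (starRingEnd ℂ) l * z))
    (hbd : ∀ z ∈ Metric.ball (0 : ℂ) 1, ‖θ z‖ ≤ 1)
    (M : ℝ) (l : ℂ) (hmem : l ∈ Metric.ball (0:ℂ) 1) (hMl : ‖k l‖ ≤ M) :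
    (1 - ‖θ l‖) / (1 - ‖l‖) ≤ 2*M^2 := by
  have habs : ‖l‖ < 1 := by
    simpa [Complex.dist_eq] using Metric.mem_ball.mp hmem
  have hkk0 : (inner ℂ (k l) (k l) : ℂ)
      = (1 - (starRingEnd ℂ) (θ l) * θ l) / (1 - (starRingEnd ℂ) l * l) := by
    rw [← hrepro (k l) l hmem, hker l hmem l hmem]
  have hkk1 : (inner ℂ (k l) (k l) : ℂ) = ((‖k l‖^2 : ℝ) : ℂ) := by
    rw [inner_self_eq_norm_sq_to_K]
    norm_cast
  have hconj1 : (starRingEnd ℂ) l * l = ((‖l‖ ^ 2 : ℝ) : ℂ) := by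
    rw [mul_comm, Complex.mul_conj, Complex.normSq_eq_norm_sq]
  have hconj2 : (starRingEnd ℂ) (θ l) * (θ l) = ((‖θ l‖ ^ 2 : ℝ) : ℂ) := by
    rw [mul_comm, Complex.mul_conj, Complex.normSq_eq_norm_sq]
  have hden : (1 : ℂ) - (starRingEnd ℂ) l * l ≠ 0 := by
    rw [hconj1]
    intro hcon
    have h2 : (1:ℝ) = ‖l‖ ^ 2 := by exact_mod_cast sub_eq_zero.mp hcon
    nlinarith [norm_nonneg l]
  have heqc : ((‖k l‖^2 : ℝ) : ℂ) * (1 - (starRingEnd ℂ) l * l)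
      = 1 - (starRingEnd ℂ) (θ l) * θ l := by
    rw [← hkk1, hkk0, div_mul_cancel₀ _ hden]
  rw [hconj1, hconj2] at heqc
  have heqr : ‖k l‖^2 * (1 - ‖l‖ ^ 2) = 1 - ‖θ l‖ ^ 2 := by
    exact_mod_cast heqc
  have hA : ‖θ l‖ ≤ 1 := hbd l hmem
  have hA0 : (0:ℝ) ≤ ‖θ l‖ := norm_nonneg _
  have hB0 : (0:ℝ) ≤ ‖l‖ := norm_nonneg _
  have hk0 : (0:ℝ) ≤ ‖k l‖ := norm_nonneg _
  have hR2 : ‖k l‖^2 ≤ M^2 := by nlinarith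
  have hB2 : (0:ℝ) ≤ 1 - ‖l‖ ^ 2 := by nlinarith
  rw [div_le_iff₀ (by linarith)]
  nlinarith [sq_nonneg (M * (1 - ‖l‖)),
    mul_nonneg (sub_nonneg.mpr hR2) hB2,
    mul_nonneg hA0 (sub_nonneg.mpr hA), heqr]

end AuxSTMT7

/-- If `λₙ → ζ ∈ 𝕋` and the reproducing kernels `{k_{λₙ}}` of the model space `K_θ` form an
overcomplete system, then `sup_n ‖k_{λₙ}‖ < ∞` and consequently `ζ` is an Ahern–Clark point
of `θ`. -/
theorem stmt7 {K : Type*} [NormedAddCommGroup K] [InnerProductSpace ℂ K] [CompleteSpace K]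
    (θ : ℂ → ℂ) (J : K →ₗ[ℂ] (ℂ → ℂ)) (k : ℂ → K) (h : IsModelSpace θ J k)
    (ζ : ℂ) (hζ : ‖ζ‖ = 1) (L : ℕ → ℂ) (hL : ∀ n, L n ∈ Metric.ball (0 : ℂ) 1)
    (hlim : Tendsto L atTop (nhds ζ))
    (hover : Overcomplete (fun n => k (L n))) :
    (∃ M : ℝ, ∀ n, ‖k (L n)‖ ≤ M) ∧ AhernClarkPoint θ ζ := by
  classical
  have hbdd : ∃ M : ℝ, ∀ n, ‖k (L n)‖ ≤ M := by
    by_contra hM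
    push_neg at hM
    -- first extraction: norms blowing up
    have hPφ : ∀ m p : ℕ, ∃ n, p < n ∧ ((m:ℝ) + 1 ≤ ‖k (L n)‖) := by
      intro m p
      obtain ⟨n, hn⟩ := hM ((m:ℝ) + 1 + ∑ i ∈ Finset.range (p+1), ‖k (L i)‖)
      refine ⟨n, ?_, ?_⟩
      · by_contra hle
        push_neg at hle
        have h1 : ‖k (L n)‖ ≤ ∑ i ∈ Finset.range (p+1), ‖k (L i)‖ :=
          Finset.single_le_sum (f := fun i => ‖k (L i)‖) (fun i _ => norm_nonneg _)
            (Finset.mem_range.mpr (by omega))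
        have h2 : (0:ℝ) ≤ (m:ℝ)+1 := by positivity
        linarith
      · have h3 : (0:ℝ) ≤ ∑ i ∈ Finset.range (p+1), ‖k (L i)‖ :=
          Finset.sum_nonneg (fun i _ => norm_nonneg _)
        linarith
    obtain ⟨j0, hj00, hj0mono, hj0p⟩ := rec_extract _ hPφ
    set φ : ℕ → ℕ := fun n => j0 (n+1) with hφdef
    have hφmono : StrictMono φ := fun a b hab => hj0mono (by omega)
    have hφnorm : ∀ n : ℕ, (n:ℝ)+1 ≤ ‖k (L (φ n))‖ := fun n => hj0p n
    have hkpos : ∀ n : ℕ, (0:ℝ) < ‖k (L (φ n))‖ :=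
      fun n => lt_of_lt_of_le (by positivity) (hφnorm n)
    set x : ℕ → K := fun n => (↑‖k (L (φ n))‖ : ℂ)⁻¹ • k (L (φ n)) with hxdef
    have hxnorm : ∀ n, ‖x n‖ = 1 := by
      intro n
      rw [hxdef]
      rw [norm_smul, norm_inv, Complex.norm_real, Real.norm_of_nonneg (norm_nonneg _)]
      exact inv_mul_cancel₀ (ne_of_gt (hkpos n))
    have hwn : ∀ f : K, Tendsto (fun n => ‖(inner ℂ (x n) f : ℂ)‖) atTop (nhds 0) :=
      fun f => weaknull θ J k h.repro h.dense_cont ζ hζ L hL hlim φ hφmono hφnorm f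
    -- second extraction: almost orthogonal subsequence
    have hPj : ∀ m p : ℕ, ∃ n, p < n ∧
        ∀ a ≤ p, ‖(inner ℂ (x a) (x n) : ℂ)‖ ≤ ((1:ℝ)/2)^(2*(m+1))/64 := by
      intro m p
      have hev : ∀ᶠ n in atTop, ∀ a ∈ Finset.range (p+1),
          ‖(inner ℂ (x a) (x n) : ℂ)‖ ≤ ((1:ℝ)/2)^(2*(m+1))/64 := by
        rw [Filter.eventually_all_finset]
        intro a _
        have h1 : Tendsto (fun n => ‖(inner ℂ (x a) (x n) : ℂ)‖) atTop (nhds 0) := by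
          have h2 := hwn (x a)
          refine h2.congr (fun n => ?_)
          exact norm_inner_symm _ _
        exact h1.eventually_le_const (by positivity)
      obtain ⟨N, hN⟩ := hev.exists_forall_of_atTop
      refine ⟨max (p+1) N, by omega, fun a ha => ?_⟩
      exact hN _ (le_max_right _ _) a (Finset.mem_range.mpr (by omega))
    obtain ⟨j, hj0', hjmono, hjp⟩ := rec_extract _ hPj
    have hG : ∀ i m, i ≠ m →
        ‖(inner ℂ (x (j i)) (x (j m)) : ℂ)‖ ≤ ((1:ℝ)/2)^i * ((1:ℝ)/2)^m / 64 := by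
      have key : ∀ i m, i < m →
          ‖(inner ℂ (x (j i)) (x (j m)) : ℂ)‖ ≤ ((1:ℝ)/2)^i * ((1:ℝ)/2)^m / 64 := by
        intro i m him
        obtain ⟨m', rfl⟩ : ∃ m', m = m'+1 := ⟨m-1, by omega⟩
        have h1 := hjp m' (j i) (hjmono.monotone (by omega))
        refine le_trans h1 ?_
        have h2 : ((1:ℝ)/2)^(2*(m'+1)) ≤ ((1:ℝ)/2)^i * ((1:ℝ)/2)^(m'+1) := by
          rw [← pow_add]
          apply pow_le_pow_of_le_one (by norm_num) (by norm_num) (by omega)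
        linarith
      intro i m him
      rcases lt_or_gt_of_ne him with hlt | hgt
      · exact key i m hlt
      · rw [← norm_inner_symm]
        have h3 := key m i hgt
        calc ‖(inner ℂ (x (j m)) (x (j i)) : ℂ)‖ ≤ ((1:ℝ)/2)^m * ((1:ℝ)/2)^i / 64 := h3
          _ = ((1:ℝ)/2)^i * ((1:ℝ)/2)^m / 64 := by ring
    -- the overcomplete subsequence
    set ψ : ℕ → ℕ := fun n => φ (j (n+1)) with hψdef
    have hψmono : StrictMono ψ := fun a b hab => hφmono (hjmono (by omega))
    have hdense := hover ψ hψmono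
    have hu0mem : x (j 0) ∈
        closure ((Submodule.span ℂ (Set.range ((fun n => k (L n)) ∘ ψ)) : Submodule ℂ K) : Set K) := by
      rw [hdense.closure_eq]; trivial
    obtain ⟨b, hbmem, hbdist⟩ := Metric.mem_closure_iff.mp hu0mem (1/4) (by norm_num)
    obtain ⟨c, hc⟩ := Finsupp.mem_span_range_iff_exists_finsupp.mp hbmem
    have hrw : b = ∑ i ∈ c.support, (c i * (‖k (L (ψ i))‖ : ℂ)) • x (j (i+1)) := by
      rw [← hc, Finsupp.sum]
      refine Finset.sum_congr rfl (fun i _ => ?_)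
      rw [mul_smul]
      congr 1
      have hne : ((‖k (L (φ (j (i+1))))‖ : ℝ) : ℂ) ≠ 0 := by
        exact_mod_cast ne_of_gt (hkpos (j (i+1)))
      show k (L (φ (j (i+1)))) = ((‖k (L (φ (j (i+1))))‖ : ℂ)) • x (j (i+1))
      simp only [hxdef]
      rw [smul_smul, mul_inv_cancel₀ hne, one_smul]
    have hcore := core_est (fun n => x (j n)) (fun n => hxnorm (j n)) hG
      (fun i => c i * (‖k (L (ψ i))‖ : ℂ)) c.support
    rw [← hrw] at hcore
    rw [dist_eq_norm] at hbdist
    linarith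
  obtain ⟨M, hM⟩ := hbdd
  refine ⟨⟨M, hM⟩, 2*M^2, ?_⟩
  have hLW : Tendsto L atTop (nhdsWithin ζ (Metric.ball (0:ℂ) 1)) :=
    tendsto_nhdsWithin_of_tendsto_nhds_of_eventually_within _ hlim
      (Filter.Eventually.of_forall hL)
  apply hLW.frequently
  apply Filter.Frequently.of_forall
  intro n
  exact ac_aux θ J k h.repro h.kernel_eq h.theta_bdd M (L n) (hL n) (hM n)
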